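/- Let X, X̃ ⊆ ℂ^n be germs of irreducible complex analytic curves at 0 admitting Puiseux parametrizations ψ(t) = (t^k, φ₂(t), ..., φ_n(t)) and ψ̃(t) = (t^k, φ̃₂(t), ..., φ̃_n(t)) on a disk D_ε, where each φ_i and φ̃_i is analytic with vanishing order strictly greater than k at 0. Then the homeomorphism φ = ψ̃ ∘ ψ⁻¹ : X → X̃ satisfies: for any sequence z_m ∈ X \ {0} with z_m → 0 and z_m/‖z_m‖ → x̄, one has φ(z_m)/‖φ(z_m)‖ → x̄. -/
import Mathlib


open Filter Topology

/-- Two irreducible curve germs with Puiseux parametrizations `ψ(t) = (t^k, φ(t))` and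
`ψ̃(t) = (t^k, φ̃(t))`, where `φ, φ̃ = o(t^k)`, are blow-spherically equivalent via
`ψ̃ ∘ ψ⁻¹`: if `z_m = ψ(s_m) → 0` with `z_m/‖z_m‖ → x̄`, then
`ψ̃(s_m)/‖ψ̃(s_m)‖ → x̄` as well. -/
theorem stmt11 {n : ℕ} (k : ℕ) (hk : 1 ≤ k)
    (φ φt : ℂ → EuclideanSpace ℂ (Fin (n - 1)))
    (hφ : Tendsto (fun t : ℂ => (t ^ k)⁻¹ • φ t) (𝓝[≠] 0) (𝓝 0))
    (hφt : Tendsto (fun t : ℂ => (t ^ k)⁻¹ • φt t) (𝓝[≠] 0) (𝓝 0))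
    (ψ ψt : ℂ → ℂ × EuclideanSpace ℂ (Fin (n - 1)))
    (hψ : ∀ t, ψ t = (t ^ k, φ t)) (hψt : ∀ t, ψt t = (t ^ k, φt t))
    (s : ℕ → ℂ) (hs0 : ∀ m, s m ≠ 0) (hs : Tendsto s atTop (𝓝 0))
    (xb : ℂ × EuclideanSpace ℂ (Fin (n - 1)))
    (hlim : Tendsto (fun m => ‖ψ (s m)‖⁻¹ • ψ (s m)) atTop (𝓝 xb)) :
    Tendsto (fun m => ‖ψt (s m)‖⁻¹ • ψt (s m)) atTop (𝓝 xb) := by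
  have hs' : Tendsto s atTop (𝓝[≠] (0:ℂ)) :=
    tendsto_nhdsWithin_of_tendsto_nhds_of_eventually_within s hs
      (Eventually.of_forall fun m => hs0 m)
  set u : ℕ → ℂ := fun m => (s m) ^ k with hu
  have hu0 : ∀ m, u m ≠ 0 := fun m => pow_ne_zero k (hs0 m)
  have key : ∀ (g : ℂ → EuclideanSpace ℂ (Fin (n-1))),
      Tendsto (fun t : ℂ => (t ^ k)⁻¹ • g t) (𝓝[≠] 0) (𝓝 0) →
      (∀ᶠ m in atTop, ‖g (s m)‖ < ‖u m‖) ∧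
      Tendsto (fun m => (‖u m‖⁻¹ : ℝ) • g (s m)) atTop (𝓝 0) := by
    intro g hg
    have h1 : Tendsto (fun m => (u m)⁻¹ • g (s m)) atTop (𝓝 0) := hg.comp hs'
    have h2 : Tendsto (fun m => ‖u m‖⁻¹ * ‖g (s m)‖) atTop (𝓝 0) := by
      have := h1.norm
      simpa [norm_smul] using this
    constructor
    · filter_upwards [h2.eventually (gt_mem_nhds (by norm_num : (0:ℝ) < 1))] with m hm
      have hpos : 0 < ‖u m‖ := norm_pos_iff.mpr (hu0 m)
      have : ‖g (s m)‖ / ‖u m‖ < 1 := by rwa [div_eq_inv_mul]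
      exact (div_lt_one hpos).mp this
    · rw [tendsto_zero_iff_norm_tendsto_zero]
      simpa [norm_smul] using h2
  obtain ⟨hev, hz⟩ := key φ hφ
  obtain ⟨hevt, hzt⟩ := key φt hφt
  have hdecomp : (fun m => ‖ψ (s m)‖⁻¹ • ψ (s m)) =ᶠ[atTop]
      (fun m => ((‖u m‖⁻¹ : ℝ) • u m, (‖u m‖⁻¹ : ℝ) • φ (s m))) := by
    filter_upwards [hev] with m hm
    rw [hψ (s m), show ‖((u m : ℂ), φ (s m))‖ = ‖u m‖ from by
      rw [Prod.norm_def]; exact max_eq_left hm.le]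
    rfl
  have hdecompt : (fun m => ‖ψt (s m)‖⁻¹ • ψt (s m)) =ᶠ[atTop]
      (fun m => ((‖u m‖⁻¹ : ℝ) • u m, (‖u m‖⁻¹ : ℝ) • φt (s m))) := by
    filter_upwards [hevt] with m hm
    rw [hψt (s m), show ‖((u m : ℂ), φt (s m))‖ = ‖u m‖ from by
      rw [Prod.norm_def]; exact max_eq_left hm.le]
    rfl
  have hlim' : Tendsto (fun m => ((‖u m‖⁻¹ : ℝ) • u m, (‖u m‖⁻¹ : ℝ) • φ (s m)))
      atTop (𝓝 xb) := hlim.congr' hdecomp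
  have hfst : Tendsto (fun m => (‖u m‖⁻¹ : ℝ) • u m) atTop (𝓝 xb.1) :=
    (continuous_fst.tendsto xb).comp hlim'
  have hsnd : Tendsto (fun m => (‖u m‖⁻¹ : ℝ) • φ (s m)) atTop (𝓝 xb.2) :=
    (continuous_snd.tendsto xb).comp hlim'
  have hxb2 : xb.2 = 0 := tendsto_nhds_unique hsnd hz
  have hfinal : Tendsto (fun m => ((‖u m‖⁻¹ : ℝ) • u m, (‖u m‖⁻¹ : ℝ) • φt (s m)))
      atTop (𝓝 xb) := by
    have hxb : xb = (xb.1, (0 : EuclideanSpace ℂ (Fin (n-1)))) := by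
      rw [← hxb2]
    rw [hxb]
    exact hfst.prodMk_nhds hzt
  exact hfinal.congr' hdecompt.symm
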